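/- Uniqueness for Dirichlet series under relaxed summability: let (λ_j) ⊂ (0,∞) be strictly increasing and (α_j) real with Σ_j |α_j|/λ_j^k < ∞ for some k ∈ ℕ. If Σ_{j=1}^∞ α_j e^{-λ_j t} = 0 for all t ∈ [0, T] for some T > 0, then α_j = 0 for all j. -/

import Mathlib

open Nat Filter Topology

/-- Key elementary bound: `x ^ k * exp (-(x * σ)) ≤ k ! / σ ^ k` for `x, σ > 0`. -/
lemma aux_pow_exp_bound (k : ℕ) {σ x : ℝ} (hσ : 0 < σ) (hx : 0 < x) :
    x ^ k * Real.exp (-(x * σ)) ≤ k ! / σ ^ k := by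
  have h1 : (x * σ) ^ k / k ! ≤ Real.exp (x * σ) :=
    Real.pow_div_factorial_le_exp _ (mul_pos hx hσ).le k
  have hk : (0:ℝ) < k ! := by positivity
  have h2 : (x * σ) ^ k ≤ k ! * Real.exp (x * σ) := by
    rw [div_le_iff₀ hk] at h1; linarith [h1]
  have hσk : (0:ℝ) < σ ^ k := pow_pos hσ k
  rw [Real.exp_neg, mul_inv_le_iff₀' (Real.exp_pos _), ← mul_div_assoc,
    le_div_iff₀ hσk, ← mul_pow]
  linarith [h2]

theorem stmt_13 (lam alpha : ℕ → ℝ) (hlam : ∀ j, 0 < lam j) (hmono : StrictMono lam)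
    (k : ℕ) (hsum : Summable fun j => |alpha j| / lam j ^ k) (T : ℝ) (hT : 0 < T)
    (hzero : ∀ t ∈ Set.Ioc 0 T, (∑' j, alpha j * Real.exp (-lam j * t)) = 0) :
    ∀ j, alpha j = 0 := by
  -- the complex Dirichlet series
  set F : ℂ → ℂ := fun s => ∑' j, (alpha j : ℂ) * Complex.exp (-(lam j : ℂ) * s) with hF
  set U : Set ℂ := {s : ℂ | 0 < s.re} with hU
  have hUopen : IsOpen U := isOpen_lt continuous_const Complex.continuous_re
  -- uniform bound on half-planes
  have hbound : ∀ σ : ℝ, 0 < σ → ∀ j, ∀ w : ℂ, w ∈ {s : ℂ | σ < s.re} →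
      ‖(alpha j : ℂ) * Complex.exp (-(lam j : ℂ) * w)‖ ≤ |alpha j| / lam j ^ k * (k ! / σ ^ k) := by
    intro σ hσ j w hw
    have hre : (-(lam j : ℂ) * w).re = -(lam j * w.re) := by
      simp [Complex.mul_re]
    simp only [norm_mul, Complex.norm_exp, Complex.norm_real, Real.norm_eq_abs, hre]
    have hw' : σ < w.re := hw
    have h1 : Real.exp (-(lam j * w.re)) ≤ Real.exp (-(lam j * σ)) := by
      apply Real.exp_le_exp.2
      nlinarith [hlam j]
    have h2 : lam j ^ k * Real.exp (-(lam j * σ)) ≤ k ! / σ ^ k :=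
      aux_pow_exp_bound k hσ (hlam j)
    have hlk : (0:ℝ) < lam j ^ k := pow_pos (hlam j) k
    calc |alpha j| * Real.exp (-(lam j * w.re))
        ≤ |alpha j| * Real.exp (-(lam j * σ)) := by
          exact mul_le_mul_of_nonneg_left h1 (abs_nonneg _)
      _ = |alpha j| / lam j ^ k * (lam j ^ k * Real.exp (-(lam j * σ))) := by
          field_simp
      _ ≤ |alpha j| / lam j ^ k * (k ! / σ ^ k) := by
          apply mul_le_mul_of_nonneg_left h2 (by positivity)
  -- F is differentiable on U
  have hdiff : DifferentiableOn ℂ F U := by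
    intro z hz
    have hz' : 0 < z.re := hz
    set σ := z.re / 2 with hσdef
    have hσ : 0 < σ := by positivity
    have hdiff' : DifferentiableOn ℂ F {s : ℂ | σ < s.re} := by
      exact Complex.differentiableOn_tsum_of_summable_norm
        (u := fun j => |alpha j| / lam j ^ k * (k ! / σ ^ k)) (hsum.mul_right _)
        (fun j => (Differentiable.differentiableOn (by fun_prop)))
        (isOpen_lt continuous_const Complex.continuous_re)
        (hbound σ hσ)
    have hmem : z ∈ {s : ℂ | σ < s.re} := by simp [hσdef]; linarith
    exact ((hdiff'.differentiableAt
      ((isOpen_lt continuous_const Complex.continuous_re).mem_nhds hmem)).differentiableWithinAt)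
  have hana : AnalyticOnNhd ℂ F U := hdiff.analyticOnNhd hUopen
  -- F vanishes at real points of (0, T]
  have hreal : ∀ t : ℝ, 0 < t → t ≤ T → F (t : ℂ) = 0 := by
    intro t ht htT
    have : F (t : ℂ) = ((∑' j, alpha j * Real.exp (-lam j * t) : ℝ) : ℂ) := by
      rw [Complex.ofReal_tsum]
      apply tsum_congr
      intro j
      push_cast
      ring_nf
    rw [this, hzero t ⟨ht, htT⟩, Complex.ofReal_zero]
  -- frequently zero near T
  have hfreq : ∃ᶠ z in 𝓝[≠] (T : ℂ), F z = 0 := by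
    have hseq : Tendsto (fun n : ℕ => ((T - T / (n + 2) : ℝ) : ℂ)) atTop (𝓝[≠] (T : ℂ)) := by
      apply tendsto_nhdsWithin_of_tendsto_nhds_of_eventually_within
      · have : Tendsto (fun n : ℕ => (T - T / (n + 2) : ℝ)) atTop (𝓝 T) := by
          have h0 : Tendsto (fun n : ℕ => (T / (n + 2) : ℝ)) atTop (𝓝 0) := by
            apply Tendsto.div_atTop tendsto_const_nhds
            exact tendsto_atTop_add_const_right _ 2 tendsto_natCast_atTop_atTop
          simpa using tendsto_const_nhds.sub h0
        exact (Complex.continuous_ofReal.tendsto T).comp this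
      · apply Eventually.of_forall
        intro n
        simp only [Set.mem_compl_iff, Set.mem_singleton_iff]
        intro h
        have : (T - T / (n + 2) : ℝ) = T := by exact_mod_cast h
        have hpos : (0:ℝ) < T / (n + 2) := by positivity
        linarith
    apply hseq.frequently
    apply Frequently.of_forall
    intro n
    apply hreal
    · have h1 : (T / (n + 2) : ℝ) < T := by
        rw [div_lt_iff₀ (by positivity)]
        nlinarith
      linarith
    · have hpos : (0:ℝ) < T / (n + 2) := by positivity
      linarith
  -- identity theorem
  have hTU : (T : ℂ) ∈ U := by simpa [hU] using hT
  have hprecon : IsPreconnected U := (convex_halfSpace_re_gt 0).isPreconnected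
  have hFzero : Set.EqOn F 0 U :=
    hana.eqOn_zero_of_preconnected_of_frequently_eq_zero hprecon hTU hfreq
  -- hence the real sum vanishes for all t > 0
  have key : ∀ t : ℝ, 0 < t → (∑' j, alpha j * Real.exp (-lam j * t)) = 0 := by
    intro t ht
    have h1 : F (t : ℂ) = 0 := hFzero (by simpa [hU] using ht)
    have h2 : F (t : ℂ) = ((∑' j, alpha j * Real.exp (-lam j * t) : ℝ) : ℂ) := by
      rw [Complex.ofReal_tsum]
      apply tsum_congr
      intro j
      push_cast
      ring_nf
    rw [h2] at h1
    exact_mod_cast h1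
  -- summability of the dominating series
  have hdom : Summable (fun i => |alpha i| * Real.exp (-lam i)) := by
    apply Summable.of_nonneg_of_le (fun i => by positivity)
      (fun i => ?_) (hsum.mul_right (k ! : ℝ))
    have h2 : lam i ^ k * Real.exp (-(lam i * 1)) ≤ k ! / 1 ^ k :=
      aux_pow_exp_bound k one_pos (hlam i)
    simp only [mul_one, one_pow, div_one] at h2
    have hlk : (0:ℝ) < lam i ^ k := pow_pos (hlam i) k
    calc |alpha i| * Real.exp (-lam i)
        = |alpha i| / lam i ^ k * (lam i ^ k * Real.exp (-lam i)) := by field_simp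
      _ ≤ |alpha i| / lam i ^ k * k ! := by
          apply mul_le_mul_of_nonneg_left h2 (by positivity)
  -- strong induction
  intro j
  induction j using Nat.strong_induction_on with
  | _ j ih =>
    set f : ℕ → ℕ → ℝ := fun n i => alpha i * Real.exp ((lam j - lam i) * (n + 1)) with hf
    set g : ℕ → ℝ := fun i => if i = j then alpha j else 0 with hg
    have htend : Tendsto (fun n => ∑' i, f n i) atTop (𝓝 (∑' i, g i)) := by
      apply tendsto_tsum_of_dominated_convergence
        (bound := fun i => |alpha i| * Real.exp (lam j) * Real.exp (-lam i))
      · simpa [mul_comm, mul_assoc, mul_left_comm] using hdom.mul_left (Real.exp (lam j))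
      · intro i
        rcases lt_trichotomy i j with h | h | h
        · have : alpha i = 0 := ih i h
          simp [hf, hg, this, Nat.ne_of_lt h]
        · subst h
          simp only [hf, hg, sub_self, zero_mul, Real.exp_zero, mul_one, if_pos rfl]
          exact tendsto_const_nhds
        · have hgi : g i = 0 := by simp [hg, Nat.ne_of_gt h]
          rw [hgi]
          have hc : lam j - lam i < 0 := sub_neg.2 (hmono h)
          have hbase : Real.exp (lam j - lam i) < 1 := Real.exp_lt_one_iff.2 hc
          have h0 : Tendsto (fun n : ℕ => Real.exp (lam j - lam i) ^ (n + 1)) atTop (𝓝 0) := by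
            exact (tendsto_pow_atTop_nhds_zero_of_lt_one (Real.exp_nonneg _) hbase).comp
              (tendsto_add_atTop_nat 1)
          have heq : ∀ n : ℕ, f n i = alpha i * Real.exp (lam j - lam i) ^ (n + 1) := by
            intro n
            rw [hf]
            simp only
            rw [← Real.exp_nat_mul]
            congr 1
            push_cast
            ring
          simp only [heq]
          simpa using h0.const_mul (alpha i)
      · apply Eventually.of_forall
        intro n i
        rcases lt_or_ge i j with h | h
        · have : alpha i = 0 := ih i h
          simp [hf, this]
        · have hle : lam j - lam i ≤ 0 := sub_nonpos.2 (hmono.monotone h)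
          have h1 : (lam j - lam i) * (n + 1) ≤ (lam j - lam i) * 1 := by
            apply mul_le_mul_of_nonpos_left _ hle
            have h0 : (0:ℝ) ≤ (n:ℝ) := Nat.cast_nonneg n
            linarith
          simp only [hf, Real.norm_eq_abs, abs_mul, Real.abs_exp]
          calc |alpha i| * Real.exp ((lam j - lam i) * (n + 1))
              ≤ |alpha i| * Real.exp (lam j - lam i) := by
                apply mul_le_mul_of_nonneg_left _ (abs_nonneg _)
                apply Real.exp_le_exp.2
                linarith
            _ = |alpha i| * Real.exp (lam j) * Real.exp (-lam i) := by
                rw [mul_assoc, ← Real.exp_add]; ring_nf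
    have hzero' : ∀ n : ℕ, (∑' i, f n i) = 0 := by
      intro n
      have : ∀ i, f n i = Real.exp (lam j * (n + 1)) * (alpha i * Real.exp (-lam i * (n + 1))) := by
        intro i
        rw [hf]
        simp only
        rw [← mul_assoc, mul_comm (Real.exp _) (alpha i), mul_assoc, ← Real.exp_add]
        congr 2
        ring
      simp_rw [this]
      rw [tsum_mul_left, key ((n : ℝ) + 1) (by positivity), mul_zero]
    have hgval : (∑' i, g i) = alpha j := tsum_ite_eq j (fun _ => alpha j)
    have : Tendsto (fun _ : ℕ => (0:ℝ)) atTop (𝓝 (alpha j)) := by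
      rw [← hgval]
      simpa [hzero'] using htend
    exact tendsto_nhds_unique this tendsto_const_nhds
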